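/- Fix α ∈ (0,1) with Σλᵢ/μᵢ < 1 − |2α − 1| ≤ 1 so that both x = 0 and x = 1 are feasible. At x = 0, the partial derivative of the (unnormalized) two-queue waiting-time objective L(x) = A_x C_x/(α(α−B_x)) + A_y C_y/((1−α)(1−α−B_y)) with respect to each xᵢ is strictly negative; at x = 1, each partial derivative is strictly positive. Consequently, neither x = 0 nor x = 1 is optimal for the stochastic assignment problem with α ∈ (0,1). -/

import Mathlib

lemma aux_deriv (l m SA SB SC β γ : ℝ) (hl : 0 < l) (hm : 0 < m)
    (hSA : 0 < SA) (hSC : 0 < SC) (hβ : 0 < β) (hγ : 0 < γ) (hSB : SB < γ) :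
    ∃ d, HasDerivAt (fun v : ℝ =>
      l * v / m ^ 2 * (l * v) / (β * (β - l * v / m)) +
      (SA - l * v / m ^ 2) * (SC - l * v) / (γ * (γ - (SB - l * v / m)))) d 0 ∧ d < 0 := by
  have h1 : HasDerivAt (fun v : ℝ => l * v / m ^ 2) (l / m ^ 2) 0 := by
    simpa using ((hasDerivAt_id (0:ℝ)).const_mul l).div_const (m ^ 2)
  have h2 : HasDerivAt (fun v : ℝ => l * v) l 0 := by
    simpa using (hasDerivAt_id (0:ℝ)).const_mul l
  have h3 : HasDerivAt (fun v : ℝ => l * v / m) (l / m) 0 := by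
    simpa using ((hasDerivAt_id (0:ℝ)).const_mul l).div_const m
  have num1 := h1.mul h2
  have den1 := (h3.const_sub β).const_mul β
  have hden1 : β * (β - l * 0 / m) ≠ 0 := by
    simp only [mul_zero, zero_div, sub_zero]; positivity
  have t1 := num1.div den1 hden1
  have num2 := (h1.const_sub SA).mul (h2.const_sub SC)
  have den2 := ((h3.const_sub SB).const_sub γ).const_mul γ
  have hγSB : 0 < γ - SB := sub_pos.mpr hSB
  have hden2 : γ * (γ - (SB - l * 0 / m)) ≠ 0 := by
    simp only [mul_zero, zero_div, sub_zero]
    exact ne_of_gt (mul_pos hγ hγSB)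
  have t2 := num2.div den2 hden2
  refine ⟨_, t1.add t2, ?_⟩
  have hq : 0 < l / m := by positivity
  have hq2 : 0 < l / m ^ 2 := by positivity
  have hP : 0 < γ * (γ - SB) := mul_pos hγ hγSB
  simp only [Pi.mul_apply, mul_zero, zero_div, sub_zero, zero_mul, add_zero, zero_add, mul_one, neg_neg,
    zero_sub, sub_self, neg_zero]
  apply div_neg_of_neg_of_pos
  · nlinarith [mul_pos (mul_pos hq2 hSC) hP, mul_pos (mul_pos hSA hl) hP,
      mul_pos (mul_pos hSA hSC) (mul_pos hγ hq)]
  · positivity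

lemma slope_right {f : ℝ → ℝ} {d ε : ℝ} (hf : HasDerivAt f d 0) (hd : d < 0) (hε : 0 < ε) :
    ∃ v : ℝ, 0 < v ∧ v < ε ∧ f v < f 0 := by
  have h := hasDerivAt_iff_tendsto_slope.mp hf
  have h2 : Filter.Tendsto (slope f 0) (nhdsWithin 0 (Set.Ioi 0)) (nhds d) :=
    h.mono_left (nhdsWithin_mono 0 (fun x hx => ne_of_gt hx))
  have ev1 := h2.eventually_lt_const hd
  have ev2 : ∀ᶠ v in nhdsWithin 0 (Set.Ioi 0), v ∈ Set.Ioo (0:ℝ) ε :=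
    Ioo_mem_nhdsGT_of_mem ⟨le_refl 0, hε⟩
  obtain ⟨v, hv1, hv2⟩ := (ev1.and ev2).exists
  refine ⟨v, hv2.1, hv2.2, ?_⟩
  rw [slope_def_field, sub_zero] at hv1
  rcases div_neg_iff.mp hv1 with ⟨ha, hb⟩ | ⟨ha, hb⟩
  · linarith [hv2.1]
  · linarith

lemma slope_left {f : ℝ → ℝ} {d δ : ℝ} (hf : HasDerivAt f d 1) (hd : 0 < d) (hδ : δ < 1) :
    ∃ v : ℝ, δ < v ∧ v < 1 ∧ f v < f 1 := by
  have h := hasDerivAt_iff_tendsto_slope.mp hf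
  have h2 : Filter.Tendsto (slope f 1) (nhdsWithin 1 (Set.Iio 1)) (nhds d) :=
    h.mono_left (nhdsWithin_mono 1 (fun x hx => ne_of_lt hx))
  have ev1 := h2.eventually_const_lt hd
  have ev2 : ∀ᶠ v in nhdsWithin 1 (Set.Iio 1), v ∈ Set.Ioo δ 1 :=
    Ioo_mem_nhdsLT_of_mem ⟨hδ, le_refl 1⟩
  obtain ⟨v, hv1, hv2⟩ := (ev1.and ev2).exists
  refine ⟨v, hv2.1, hv2.2, ?_⟩
  rw [slope_def_field] at hv1
  rcases div_pos_iff.mp hv1 with ⟨ha, hb⟩ | ⟨ha, hb⟩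
  · linarith [hv2.2]
  · linarith

/-- When both `x = 0` and `x = 1` are feasible, all partial derivatives of the
unnormalized waiting-time objective are strictly negative at `x = 0` and
strictly positive at `x = 1`; hence neither is optimal. -/
theorem stmt_14 (n : ℕ) (hn : 0 < n) (lam mu : Fin n → ℝ)
    (hlam : ∀ k, 0 < lam k) (hmu : ∀ k, 0 < mu k)
    (α : ℝ) (hα : α ∈ Set.Ioo (0 : ℝ) 1)
    (htraffic : ∑ k, lam k / mu k < 1 - |2 * α - 1|)
    (hfeas0 : ∑ k, lam k / mu k < 1 - α) (hfeas1 : ∑ k, lam k / mu k < α)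
    (L : (Fin n → ℝ) → ℝ)
    (hL : ∀ y : Fin n → ℝ, L y =
      (∑ k, lam k * y k / (mu k) ^ 2) * (∑ k, lam k * y k) /
          (α * (α - ∑ k, lam k * y k / mu k)) +
        (∑ k, lam k * (1 - y k) / (mu k) ^ 2) * (∑ k, lam k * (1 - y k)) /
          ((1 - α) * (1 - α - ∑ k, lam k * (1 - y k) / mu k)))
    (S : Set (Fin n → ℝ))
    (hS : S = {y : Fin n → ℝ | (∀ k, y k ∈ Set.Icc (0 : ℝ) 1) ∧
      ∑ k, lam k * y k / mu k < α ∧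
      ∑ k, lam k * (1 - y k) / mu k < 1 - α}) :
    (∀ i : Fin n,
        deriv (fun v : ℝ => L (Function.update (fun _ => (0 : ℝ)) i v)) 0 < 0) ∧
      (∀ i : Fin n,
        0 < deriv (fun v : ℝ => L (Function.update (fun _ => (1 : ℝ)) i v)) 1) ∧
      ¬ (∀ y ∈ S, L (fun _ => (0 : ℝ)) ≤ L y) ∧
      ¬ (∀ y ∈ S, L (fun _ => (1 : ℝ)) ≤ L y) := by
  obtain ⟨hα0, hα1⟩ := hα
  have hα1' : (0:ℝ) < 1 - α := by linarith
  have hnonempty : (Finset.univ : Finset (Fin n)).Nonempty :=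
    Finset.univ_nonempty_iff.mpr (Fin.pos_iff_nonempty.mp hn)
  have hSA : 0 < ∑ k, lam k / mu k ^ 2 :=
    Finset.sum_pos (fun k _ => div_pos (hlam k) (pow_pos (hmu k) 2)) hnonempty
  have hSC : 0 < ∑ k, lam k := Finset.sum_pos (fun k _ => hlam k) hnonempty
  -- sum identities at x = 0
  have e1 : ∀ (i : Fin n) (v : ℝ),
      ∑ k, lam k * Function.update (fun _ => (0:ℝ)) i v k / mu k ^ 2
        = lam i * v / mu i ^ 2 := by
    intro i v
    rw [Finset.sum_eq_single_of_mem i (Finset.mem_univ i)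
      (fun b _ hb => by rw [Function.update_of_ne hb]; simp), Function.update_self]
  have e2 : ∀ (i : Fin n) (v : ℝ),
      ∑ k, lam k * Function.update (fun _ => (0:ℝ)) i v k / mu k
        = lam i * v / mu i := by
    intro i v
    rw [Finset.sum_eq_single_of_mem i (Finset.mem_univ i)
      (fun b _ hb => by rw [Function.update_of_ne hb]; simp), Function.update_self]
  have e3 : ∀ (i : Fin n) (v : ℝ),
      ∑ k, lam k * Function.update (fun _ => (0:ℝ)) i v k = lam i * v := by
    intro i v
    rw [Finset.sum_eq_single_of_mem i (Finset.mem_univ i)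
      (fun b _ hb => by rw [Function.update_of_ne hb]; simp), Function.update_self]
  have e1' : ∀ (i : Fin n) (v : ℝ),
      ∑ k, lam k * (1 - Function.update (fun _ => (0:ℝ)) i v k) / mu k ^ 2
        = (∑ k, lam k / mu k ^ 2) - lam i * v / mu i ^ 2 := by
    intro i v
    rw [Finset.sum_congr rfl (fun k _ =>
      show lam k * (1 - Function.update (fun _ => (0:ℝ)) i v k) / mu k ^ 2
        = lam k / mu k ^ 2 - lam k * Function.update (fun _ => (0:ℝ)) i v k / mu k ^ 2 by ring),
      Finset.sum_sub_distrib, e1 i v]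
  have e2' : ∀ (i : Fin n) (v : ℝ),
      ∑ k, lam k * (1 - Function.update (fun _ => (0:ℝ)) i v k) / mu k
        = (∑ k, lam k / mu k) - lam i * v / mu i := by
    intro i v
    rw [Finset.sum_congr rfl (fun k _ =>
      show lam k * (1 - Function.update (fun _ => (0:ℝ)) i v k) / mu k
        = lam k / mu k - lam k * Function.update (fun _ => (0:ℝ)) i v k / mu k by ring),
      Finset.sum_sub_distrib, e2 i v]
  have e3' : ∀ (i : Fin n) (v : ℝ),
      ∑ k, lam k * (1 - Function.update (fun _ => (0:ℝ)) i v k)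
        = (∑ k, lam k) - lam i * v := by
    intro i v
    rw [Finset.sum_congr rfl (fun k _ =>
      show lam k * (1 - Function.update (fun _ => (0:ℝ)) i v k)
        = lam k - lam k * Function.update (fun _ => (0:ℝ)) i v k by ring),
      Finset.sum_sub_distrib, e3 i v]
  -- sum identities at x = 1
  have f1 : ∀ (i : Fin n) (v : ℝ),
      ∑ k, lam k * (1 - Function.update (fun _ => (1:ℝ)) i v k) / mu k ^ 2
        = lam i * (1 - v) / mu i ^ 2 := by
    intro i v
    rw [Finset.sum_eq_single_of_mem i (Finset.mem_univ i)
      (fun b _ hb => by rw [Function.update_of_ne hb]; simp), Function.update_self]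
  have f2 : ∀ (i : Fin n) (v : ℝ),
      ∑ k, lam k * (1 - Function.update (fun _ => (1:ℝ)) i v k) / mu k
        = lam i * (1 - v) / mu i := by
    intro i v
    rw [Finset.sum_eq_single_of_mem i (Finset.mem_univ i)
      (fun b _ hb => by rw [Function.update_of_ne hb]; simp), Function.update_self]
  have f3 : ∀ (i : Fin n) (v : ℝ),
      ∑ k, lam k * (1 - Function.update (fun _ => (1:ℝ)) i v k) = lam i * (1 - v) := by
    intro i v
    rw [Finset.sum_eq_single_of_mem i (Finset.mem_univ i)
      (fun b _ hb => by rw [Function.update_of_ne hb]; simp), Function.update_self]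
  have f1' : ∀ (i : Fin n) (v : ℝ),
      ∑ k, lam k * Function.update (fun _ => (1:ℝ)) i v k / mu k ^ 2
        = (∑ k, lam k / mu k ^ 2) - lam i * (1 - v) / mu i ^ 2 := by
    intro i v
    rw [Finset.sum_congr rfl (fun k _ =>
      show lam k * Function.update (fun _ => (1:ℝ)) i v k / mu k ^ 2
        = lam k / mu k ^ 2 - lam k * (1 - Function.update (fun _ => (1:ℝ)) i v k) / mu k ^ 2
        by ring),
      Finset.sum_sub_distrib, f1 i v]
  have f2' : ∀ (i : Fin n) (v : ℝ),
      ∑ k, lam k * Function.update (fun _ => (1:ℝ)) i v k / mu k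
        = (∑ k, lam k / mu k) - lam i * (1 - v) / mu i := by
    intro i v
    rw [Finset.sum_congr rfl (fun k _ =>
      show lam k * Function.update (fun _ => (1:ℝ)) i v k / mu k
        = lam k / mu k - lam k * (1 - Function.update (fun _ => (1:ℝ)) i v k) / mu k by ring),
      Finset.sum_sub_distrib, f2 i v]
  have f3' : ∀ (i : Fin n) (v : ℝ),
      ∑ k, lam k * Function.update (fun _ => (1:ℝ)) i v k
        = (∑ k, lam k) - lam i * (1 - v) := by
    intro i v
    rw [Finset.sum_congr rfl (fun k _ =>
      show lam k * Function.update (fun _ => (1:ℝ)) i v k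
        = lam k - lam k * (1 - Function.update (fun _ => (1:ℝ)) i v k) by ring),
      Finset.sum_sub_distrib, f3 i v]
  -- the function along coordinate i at x = 0
  have hfun0 : ∀ i : Fin n, (fun v : ℝ => L (Function.update (fun _ => (0 : ℝ)) i v)) =
      (fun v : ℝ =>
        lam i * v / mu i ^ 2 * (lam i * v) / (α * (α - lam i * v / mu i)) +
        ((∑ k, lam k / mu k ^ 2) - lam i * v / mu i ^ 2) * ((∑ k, lam k) - lam i * v) /
          ((1 - α) * (1 - α - ((∑ k, lam k / mu k) - lam i * v / mu i)))) := by
    intro i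
    funext v
    rw [hL, e1 i v, e2 i v, e3 i v, e1' i v, e2' i v, e3' i v]
  -- the function along coordinate i at x = 1
  have hfun1 : ∀ i : Fin n, (fun v : ℝ => L (Function.update (fun _ => (1 : ℝ)) i v)) =
      ((fun w : ℝ =>
        lam i * w / mu i ^ 2 * (lam i * w) / ((1 - α) * (1 - α - lam i * w / mu i)) +
        ((∑ k, lam k / mu k ^ 2) - lam i * w / mu i ^ 2) * ((∑ k, lam k) - lam i * w) /
          (α * (α - ((∑ k, lam k / mu k) - lam i * w / mu i)))) ∘ (fun v : ℝ => 1 - v)) := by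
    intro i
    funext v
    rw [hL, f1 i v, f2 i v, f3 i v, f1' i v, f2' i v, f3' i v]
    simp only [Function.comp_apply]
    exact add_comm _ _
  -- derivatives
  have hd0 : ∀ i : Fin n, ∃ d,
      HasDerivAt (fun v : ℝ => L (Function.update (fun _ => (0 : ℝ)) i v)) d 0 ∧ d < 0 := by
    intro i
    obtain ⟨d, hd, hdneg⟩ := aux_deriv (lam i) (mu i) (∑ k, lam k / mu k ^ 2)
      (∑ k, lam k / mu k) (∑ k, lam k) α (1 - α)
      (hlam i) (hmu i) hSA hSC hα0 hα1' hfeas0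
    exact ⟨d, by rw [hfun0 i]; exact hd, hdneg⟩
  have hd1 : ∀ i : Fin n, ∃ d,
      HasDerivAt (fun v : ℝ => L (Function.update (fun _ => (1 : ℝ)) i v)) d 1 ∧ 0 < d := by
    intro i
    obtain ⟨d, hd, hdneg⟩ := aux_deriv (lam i) (mu i) (∑ k, lam k / mu k ^ 2)
      (∑ k, lam k / mu k) (∑ k, lam k) (1 - α) α
      (hlam i) (hmu i) hSA hSC hα1' hα0 hfeas1
    have hneg : HasDerivAt (fun v : ℝ => 1 - v) (-1 : ℝ) 1 := by
      simpa using (hasDerivAt_id (1:ℝ)).const_sub 1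
    have h10 : (0:ℝ) = (fun v : ℝ => 1 - v) 1 := by norm_num
    rw [h10] at hd
    have comp := HasDerivAt.comp 1 hd hneg
    refine ⟨d * -1, ?_, by linarith⟩
    rw [hfun1 i]
    exact comp
  refine ⟨?_, ?_, ?_, ?_⟩
  · intro i
    obtain ⟨d, hd, hdneg⟩ := hd0 i
    rw [hd.deriv]; exact hdneg
  · intro i
    obtain ⟨d, hd, hdpos⟩ := hd1 i
    rw [hd.deriv]; exact hdpos
  · intro hopt
    obtain ⟨i⟩ : Nonempty (Fin n) := Fin.pos_iff_nonempty.mp hn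
    obtain ⟨d, hd, hdneg⟩ := hd0 i
    have hε : (0:ℝ) < min 1 (α * mu i / lam i) :=
      lt_min one_pos (div_pos (mul_pos hα0 (hmu i)) (hlam i))
    obtain ⟨v, hv0, hvε, hvlt⟩ := slope_right hd hdneg hε
    have hmem : Function.update (fun _ => (0:ℝ)) i v ∈ S := by
      rw [hS]
      refine ⟨?_, ?_, ?_⟩
      · intro k
        rw [Function.update_apply]
        split_ifs
        · exact ⟨le_of_lt hv0, le_trans (le_of_lt hvε) (min_le_left _ _)⟩
        · exact ⟨le_refl 0, zero_le_one⟩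
      · rw [e2 i v, div_lt_iff₀ (hmu i)]
        have h := lt_of_lt_of_le hvε (min_le_right 1 (α * mu i / lam i))
        rw [lt_div_iff₀ (hlam i)] at h
        rw [mul_comm]; exact h
      · rw [e2' i v]
        have hpos : 0 < lam i * v / mu i := div_pos (mul_pos (hlam i) hv0) (hmu i)
        linarith [hfeas0]
    have h00 : Function.update (fun _ => (0:ℝ)) i (0:ℝ) = (fun _ => (0:ℝ)) := by
      funext k; rw [Function.update_apply]; split_ifs <;> rfl
    rw [h00] at hvlt
    linarith [hopt _ hmem, hvlt]
  · intro hopt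
    obtain ⟨i⟩ : Nonempty (Fin n) := Fin.pos_iff_nonempty.mp hn
    obtain ⟨d, hd, hdpos⟩ := hd1 i
    have hδ : max 0 (1 - (1 - α) * mu i / lam i) < 1 :=
      max_lt one_pos (by
        have : 0 < (1 - α) * mu i / lam i := div_pos (mul_pos hα1' (hmu i)) (hlam i)
        linarith)
    obtain ⟨v, hvδ, hv1, hvlt⟩ := slope_left hd hdpos hδ
    have hv0 : 0 < v := lt_of_le_of_lt (le_max_left _ _) hvδ
    have hmem : Function.update (fun _ => (1:ℝ)) i v ∈ S := by
      rw [hS]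
      refine ⟨?_, ?_, ?_⟩
      · intro k
        rw [Function.update_apply]
        split_ifs
        · exact ⟨le_of_lt hv0, le_of_lt hv1⟩
        · exact ⟨zero_le_one, le_refl 1⟩
      · rw [f2' i v]
        have hpos : 0 < lam i * (1 - v) / mu i :=
          div_pos (mul_pos (hlam i) (by linarith)) (hmu i)
        linarith [hfeas1]
      · rw [f2 i v, div_lt_iff₀ (hmu i)]
        have h := lt_of_le_of_lt (le_max_right 0 (1 - (1 - α) * mu i / lam i)) hvδ
        have h2 : 1 - v < (1 - α) * mu i / lam i := by linarith
        rw [lt_div_iff₀ (hlam i)] at h2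
        rw [mul_comm]; exact h2
    have h11 : Function.update (fun _ => (1:ℝ)) i (1:ℝ) = (fun _ => (1:ℝ)) := by
      funext k; rw [Function.update_apply]; split_ifs <;> rfl
    rw [h11] at hvlt
    linarith [hopt _ hmem, hvlt]
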